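/- arXiv:2302.08357 — 2 statements merged into one kernel-verified Lean document; each statement's English description precedes it below -/
import Mathlib

section
/- Let d ≥ 3 be an integer and let c ≥ 1 be a real number. In the unit-radius ball of ℝ^d, the Lebesgue volume of the region {x : ‖x‖ ≤ 1 and x₁ ≥ c/√(d−1)} is at most (2/c) · e^{−c²/2} times the Lebesgue volume of the upper hemisphere {x : ‖x‖ ≤ 1 and x₁ ≥ 0}. -/
open MeasureTheory Set

/-- `(1 - 1/n)^n ≥ 1/4` for `n ≥ 2`. -/
lemma quarter_le_aux (n : ℕ) (hn : 2 ≤ n) : (1/4 : ℝ) ≤ (1 - 1/(n:ℝ))^n := by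
  by_cases h4 : n ≤ 4
  · interval_cases n
    · norm_num
    · norm_num
    · norm_num
  · push_neg at h4
    have hn5 : (5:ℝ) ≤ (n:ℝ) := by exact_mod_cast h4
    have hnpos : (0:ℝ) < n := by linarith
    have h1 : Real.exp (-(5/(4*(n:ℝ)))) ≤ 1 - 1/(n:ℝ) := by
      have hx : (0:ℝ) < 1 + 5/(4*(n:ℝ)) := by positivity
      have := Real.add_one_le_exp (5/(4*(n:ℝ)))
      have hexp : Real.exp (-(5/(4*(n:ℝ)))) = 1 / Real.exp (5/(4*(n:ℝ))) := by
        rw [Real.exp_neg]; ring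
      rw [hexp]
      have h2 : 1 / Real.exp (5/(4*(n:ℝ))) ≤ 1 / (1 + 5/(4*(n:ℝ))) := by
        apply one_div_le_one_div_of_le hx
        linarith
      refine h2.trans ?_
      rw [div_le_iff₀ hx]
      have heq : (1 - 1/(n:ℝ)) * (1 + 5/(4*(n:ℝ))) - 1 = (n - 5) / (4 * n^2) := by
        field_simp; ring
      have hge : (0:ℝ) ≤ ((n:ℝ) - 5) / (4 * (n:ℝ)^2) :=
        div_nonneg (by linarith) (by positivity)
      linarith
    have h2 : Real.exp (-(5/(4*(n:ℝ))))^n ≤ (1 - 1/(n:ℝ))^n := by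
      apply pow_le_pow_left₀ (Real.exp_nonneg _) h1
    refine le_trans ?_ h2
    rw [← Real.exp_nat_mul]
    have hval : (n:ℝ) * (-(5/(4*(n:ℝ)))) = -(5/4) := by field_simp
    rw [hval]
    have hexp54 : Real.exp (5/4) ≤ 4 := by
      have h14 : Real.exp (1/4 : ℝ) ≤ 4/3 := by
        have := Real.add_one_le_exp (-(1/4) : ℝ)
        have h0 : (3/4 : ℝ) ≤ Real.exp (-(1/4)) := by linarith
        have : Real.exp (1/4 : ℝ) = 1 / Real.exp (-(1/4)) := by
          rw [Real.exp_neg]; field_simp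
        rw [this]
        rw [div_le_iff₀ (by positivity)]
        linarith
      have he1 : Real.exp 1 < 2.7182818286 := Real.exp_one_lt_d9
      have : Real.exp (5/4 : ℝ) = Real.exp 1 * Real.exp (1/4 : ℝ) := by
        rw [← Real.exp_add]; norm_num
      rw [this]
      nlinarith [Real.exp_pos (1/4 : ℝ)]
    rw [Real.exp_neg]
    rw [le_inv_comm₀ (by norm_num) (Real.exp_pos _)]
    linarith

/-- Slicing formula for the volume of a cap of the unit ball. -/
lemma volume_cap_eq (n : ℕ) (hn : 1 ≤ n) (b : ℝ) :
    volume {x : EuclideanSpace ℝ (Fin (n+1)) | ‖x‖ ≤ 1 ∧ b ≤ x 0} =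
      volume (Metric.closedBall (0 : EuclideanSpace ℝ (Fin n)) 1) *
        ∫⁻ s in Set.Ici b, ENNReal.ofReal (Real.sqrt (1 - s^2) ^ n) := by
  have e1 := EuclideanSpace.volume_preserving_symm_measurableEquiv_toLp (Fin (n+1))
  have e2 := measurePreserving_piFinSuccAbove (fun _ : Fin (n+1) => (volume : Measure ℝ)) 0
  have e3 := EuclideanSpace.volume_preserving_symm_measurableEquiv_toLp (Fin n)
  set B := volume (Metric.closedBall (0 : EuclideanSpace ℝ (Fin n)) 1) with hB
  set U : Set (ℝ × (Fin n → ℝ)) :=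
    {p : ℝ × (Fin n → ℝ) | p.1 ^ 2 + ∑ i, p.2 i ^ 2 ≤ 1 ∧ b ≤ p.1} with hU
  have hUmeas : MeasurableSet U := by
    have : U = {p : ℝ × (Fin n → ℝ) | p.1 ^ 2 + ∑ i, p.2 i ^ 2 ≤ 1} ∩
        {p : ℝ × (Fin n → ℝ) | b ≤ p.1} := rfl
    rw [this]
    exact (measurableSet_le (by fun_prop) measurable_const).inter
      (measurableSet_le measurable_const measurable_fst)
  have hset : {x : EuclideanSpace ℝ (Fin (n+1)) | ‖x‖ ≤ 1 ∧ b ≤ x 0} =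
      (MeasurableEquiv.toLp 2 (Fin (n+1) → ℝ)).symm ⁻¹'
        ((MeasurableEquiv.piFinSuccAbove (fun _ : Fin (n+1) => ℝ) 0) ⁻¹' U) := by
    ext x
    have hnorm : ‖x‖ ≤ 1 ↔ ∑ i, x i ^ 2 ≤ 1 := by
      rw [EuclideanSpace.norm_eq]
      rw [show (1:ℝ) = Real.sqrt 1 by simp]
      rw [Real.sqrt_le_sqrt_iff (by positivity)]
      simp [sq_abs]
    have hsum : ∑ i, x i ^ 2 = x 0 ^ 2 + ∑ i, x (Fin.succAbove 0 i) ^ 2 :=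
      Fin.sum_univ_succAbove (fun i => x i ^ 2) 0
    have happ : ((MeasurableEquiv.piFinSuccAbove (fun _ : Fin (n+1) => ℝ) 0)
        ((MeasurableEquiv.toLp 2 (Fin (n+1) → ℝ)).symm x)) =
        (x 0, fun i => x (Fin.succAbove 0 i)) := rfl
    simp only [Set.mem_setOf_eq, Set.mem_preimage, happ, hU]
    rw [hnorm, hsum]
  rw [hset, e1.measure_preimage
      ((hUmeas.preimage (MeasurableEquiv.piFinSuccAbove _ 0).measurable).nullMeasurableSet)]
  rw [show (volume : Measure (Fin (n+1) → ℝ)) = Measure.pi fun _ => volume from volume_pi]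
  rw [e2.measure_preimage hUmeas.nullMeasurableSet]
  rw [Measure.prod_apply hUmeas]
  rw [show (Measure.pi fun _ : Fin n => (volume : Measure ℝ)) = volume from volume_pi.symm]
  have hslice : ∀ s : ℝ, (volume : Measure (Fin n → ℝ)) (Prod.mk s ⁻¹' U) =
      (Set.Ici b).indicator (fun s => ENNReal.ofReal (Real.sqrt (1 - s^2) ^ n) * B) s := by
    intro s
    by_cases hbs : b ≤ s
    · rw [Set.indicator_of_mem (show s ∈ Set.Ici b from hbs)]
      have hpre : Prod.mk s ⁻¹' U = {y : Fin n → ℝ | ∑ i, y i ^ 2 ≤ 1 - s^2} := by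
        ext y
        simp only [hU, Set.mem_preimage, Set.mem_setOf_eq]
        constructor
        · rintro ⟨h1, _⟩; linarith
        · intro h; exact ⟨by linarith, hbs⟩
      rcases le_or_gt 0 (1 - s^2) with h | h
      · rw [hpre, ← e3.measure_preimage
          (measurableSet_le (by fun_prop) measurable_const).nullMeasurableSet]
        have hpre2 : (MeasurableEquiv.toLp 2 (Fin n → ℝ)).symm ⁻¹'
            {y : Fin n → ℝ | ∑ i, y i ^ 2 ≤ 1 - s^2} =
            Metric.closedBall (0 : EuclideanSpace ℝ (Fin n)) (Real.sqrt (1 - s^2)) := by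
          ext y
          simp only [Set.mem_preimage, Set.mem_setOf_eq, Metric.mem_closedBall,
            dist_zero_right]
          rw [EuclideanSpace.norm_eq, Real.sqrt_le_sqrt_iff (by positivity)]
          have : ∀ i : Fin n, ‖y i‖ ^ 2 = (MeasurableEquiv.toLp 2 (Fin n → ℝ)).symm y i ^ 2 := by
            intro i; rw [Real.norm_eq_abs, sq_abs]; rfl
          simp_rw [this]
        rw [hpre2, Measure.addHaar_closedBall' _ _ (Real.sqrt_nonneg _),
          finrank_euclideanSpace_fin]
      · have hempty : {y : Fin n → ℝ | ∑ i, y i ^ 2 ≤ 1 - s^2} = ∅ := by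
          ext y
          simp only [Set.mem_setOf_eq, Set.mem_empty_iff_false, iff_false, not_le]
          have : (0:ℝ) ≤ ∑ i, y i ^ 2 := by positivity
          linarith
        rw [hpre, hempty]
        simp [Real.sqrt_eq_zero'.mpr h.le, zero_pow (by omega : n ≠ 0)]
    · rw [Set.indicator_of_notMem (show s ∉ Set.Ici b from hbs)]
      have : Prod.mk s ⁻¹' U = ∅ := by
        ext y; simp only [hU, Set.mem_preimage, Set.mem_setOf_eq, Set.mem_empty_iff_false]
        tauto
      simp [this]
  simp_rw [hslice]
  rw [lintegral_indicator measurableSet_Ici]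
  rw [lintegral_mul_const _ (by fun_prop), mul_comm]

/-- Gaussian-style tail bound for the cap integral. -/
lemma cap_integral_le (n : ℕ) (hn : 1 ≤ n) (b : ℝ) (hb : 0 < b) :
    ∫⁻ s in Set.Ici b, ENNReal.ofReal (Real.sqrt (1 - s^2) ^ n) ≤
      ENNReal.ofReal ((1/((n:ℝ)*b)) * Real.exp ((-(n:ℝ)/2) * b^2)) := by
  have hnpos : (0:ℝ) < n := by exact_mod_cast hn
  set h : ℝ → ℝ := fun s => (s/b) * Real.exp ((-(n:ℝ)/2) * s^2) with hh
  set G : ℝ → ℝ := fun s => -(1/((n:ℝ)*b)) * Real.exp ((-(n:ℝ)/2) * s^2) with hG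
  have hderiv : ∀ x ∈ Set.Ici b, HasDerivAt G (h x) x := by
    intro x _
    have h1 : HasDerivAt (fun s : ℝ => (-(n:ℝ)/2) * s^2) ((-(n:ℝ)/2) * (2*x^1)) x :=
      (hasDerivAt_pow 2 x).const_mul ((-(n:ℝ)/2))
    have h2 := (h1.exp).const_mul (-(1/((n:ℝ)*b)))
    refine h2.congr_deriv ?_
    rw [hh]
    field_simp
  have htend : Filter.Tendsto G Filter.atTop (nhds 0) := by
    have h1 : Filter.Tendsto (fun s : ℝ => (-(n:ℝ)/2) * s^2) Filter.atTop Filter.atBot :=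
      (Filter.tendsto_const_mul_atBot_of_neg (by linarith)).mpr (Filter.tendsto_pow_atTop two_ne_zero)
    have h2 : Filter.Tendsto (fun s : ℝ => Real.exp ((-(n:ℝ)/2) * s^2))
        Filter.atTop (nhds 0) := Real.tendsto_exp_atBot.comp h1
    have h3 := h2.const_mul (-(1/((n:ℝ)*b)))
    rw [mul_zero] at h3
    exact h3
  have hpos : ∀ x ∈ Set.Ioi b, 0 ≤ h x := by
    intro x hx
    have : 0 < x := lt_trans hb hx
    positivity
  have hint : IntegrableOn h (Set.Ioi b) :=
    integrableOn_Ioi_deriv_of_nonneg' hderiv hpos htend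
  have hval : ∫ s in Set.Ioi b, h s = (1/((n:ℝ)*b)) * Real.exp ((-(n:ℝ)/2) * b^2) := by
    rw [integral_Ioi_of_hasDerivAt_of_tendsto' hderiv hint htend]
    rw [hG]
    ring
  have hmono : ∫⁻ s in Set.Ici b, ENNReal.ofReal (Real.sqrt (1 - s^2) ^ n) ≤
      ∫⁻ s in Set.Ici b, ENNReal.ofReal (h s) := by
    apply setLIntegral_mono (by fun_prop)
    intro s hs
    apply ENNReal.ofReal_le_ofReal
    have hs0 : 0 < s := lt_of_lt_of_le hb hs
    have step1 : Real.sqrt (1 - s^2) ≤ Real.exp ((-1/2) * s^2) := by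
      rcases le_or_gt (1 - s^2) 0 with h1 | h1
      · rw [Real.sqrt_eq_zero'.mpr h1]
        exact (Real.exp_pos _).le
      · have h2 : 1 - s^2 ≤ Real.exp (-(s^2)) := by
          have := Real.add_one_le_exp (-(s^2))
          linarith
        calc Real.sqrt (1 - s^2) ≤ Real.sqrt (Real.exp (-(s^2))) := Real.sqrt_le_sqrt h2
          _ = Real.exp (-(s^2)/2) := (Real.exp_half _).symm
          _ = Real.exp ((-1/2) * s^2) := by ring_nf
    have step2 : Real.sqrt (1 - s^2) ^ n ≤ Real.exp ((-(n:ℝ)/2) * s^2) := by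
      calc Real.sqrt (1 - s^2) ^ n ≤ Real.exp ((-1/2) * s^2) ^ n :=
            pow_le_pow_left₀ (Real.sqrt_nonneg _) step1 n
        _ = Real.exp ((n:ℝ) * ((-1/2) * s^2)) := (Real.exp_nat_mul _ n).symm
        _ = Real.exp ((-(n:ℝ)/2) * s^2) := by ring_nf
    have step3 : (1:ℝ) ≤ s / b := (one_le_div hb).mpr hs
    calc Real.sqrt (1 - s^2) ^ n ≤ Real.exp ((-(n:ℝ)/2) * s^2) := step2
      _ = 1 * Real.exp ((-(n:ℝ)/2) * s^2) := (one_mul _).symm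
      _ ≤ (s/b) * Real.exp ((-(n:ℝ)/2) * s^2) := by
          apply mul_le_mul_of_nonneg_right step3 (Real.exp_pos _).le
  refine hmono.trans ?_
  rw [← restrict_Ioi_eq_restrict_Ici]
  rw [← ofReal_integral_eq_lintegral_ofReal hint]
  · rw [hval]
  · filter_upwards [ae_restrict_mem measurableSet_Ioi] with x hx using hpos x hx

/-- Lower bound for the hemisphere integral. -/
lemma hemi_integral_ge (n : ℕ) (hn : 2 ≤ n) :
    ENNReal.ofReal (1/(2*Real.sqrt n)) ≤
      ∫⁻ s in Set.Ici (0:ℝ), ENNReal.ofReal (Real.sqrt (1 - s^2) ^ n) := by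
  have hn1 : (0:ℕ) < n := by omega
  have hnpos : (0:ℝ) < n := by exact_mod_cast hn1
  have hsn : 0 < Real.sqrt n := Real.sqrt_pos.mpr hnpos
  have hsub : Set.Icc (0:ℝ) (1/Real.sqrt n) ⊆ Set.Ici 0 := fun x hx => hx.1
  refine le_trans ?_ (lintegral_mono_set hsub)
  have h1n : (0:ℝ) ≤ 1 - 1/(n:ℝ) := by
    rw [sub_nonneg, div_le_one hnpos]
    exact_mod_cast Nat.one_le_iff_ne_zero.mpr (by omega)
  have hptw : ∀ s ∈ Set.Icc (0:ℝ) (1/Real.sqrt n), (1/2:ℝ) ≤ Real.sqrt (1-s^2)^n := by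
    intro s hs
    have hs2 : s^2 ≤ 1/(n:ℝ) := by
      have h := pow_le_pow_left₀ hs.1 hs.2 2
      rwa [div_pow, one_pow, Real.sq_sqrt hnpos.le] at h
    have hmono : Real.sqrt (1 - 1/(n:ℝ)) ≤ Real.sqrt (1 - s^2) :=
      Real.sqrt_le_sqrt (by linarith)
    have hp : Real.sqrt (1-1/(n:ℝ))^n ≤ Real.sqrt (1-s^2)^n :=
      pow_le_pow_left₀ (Real.sqrt_nonneg _) hmono n
    have hq : (1/4:ℝ) ≤ (1 - 1/(n:ℝ))^n := quarter_le_aux n hn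
    have hsq : (Real.sqrt (1-1/(n:ℝ))^n)^2 = (1-1/(n:ℝ))^n := by
      rw [← pow_mul, mul_comm, pow_mul, Real.sq_sqrt h1n]
    have ht0 : (0:ℝ) ≤ Real.sqrt (1-1/(n:ℝ))^n := pow_nonneg (Real.sqrt_nonneg _) n
    nlinarith [hsq, hq, ht0, hp]
  calc ENNReal.ofReal (1/(2*Real.sqrt n))
      = ENNReal.ofReal (1/2 : ℝ) * volume (Set.Icc (0:ℝ) (1/Real.sqrt n)) := by
        rw [Real.volume_Icc, ← ENNReal.ofReal_mul (by norm_num)]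
        congr 1
        rw [sub_zero]
        field_simp
    _ = ∫⁻ _ in Set.Icc (0:ℝ) (1/Real.sqrt n), ENNReal.ofReal (1/2:ℝ) :=
        (setLIntegral_const _ _).symm
    _ ≤ ∫⁻ s in Set.Icc (0:ℝ) (1/Real.sqrt n), ENNReal.ofReal (Real.sqrt (1-s^2)^n) :=
        setLIntegral_mono (by fun_prop) (fun s hs => ENNReal.ofReal_le_ofReal (hptw s hs))

/-- For `d ≥ 3` and `c ≥ 1`, the volume of the portion of the unit ball of `ℝ^d` above the
plane `x₁ = c/√(d−1)` is at most `(2/c) e^{−c²/2}` times the volume of the upper hemisphere. -/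
theorem volume_cap_le_hemisphere (d : ℕ) (hd : 3 ≤ d) (c : ℝ) (hc : 1 ≤ c) :
    volume {x : EuclideanSpace ℝ (Fin d) |
        ‖x‖ ≤ 1 ∧ c / Real.sqrt ((d : ℝ) - 1) ≤ x ⟨0, by omega⟩}
      ≤ ENNReal.ofReal ((2 / c) * Real.exp (-(c ^ 2) / 2)) *
          volume {x : EuclideanSpace ℝ (Fin d) | ‖x‖ ≤ 1 ∧ 0 ≤ x ⟨0, by omega⟩} := by
  obtain ⟨n, rfl⟩ : ∃ n, d = n + 1 := ⟨d - 1, by omega⟩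
  have hn : 2 ≤ n := by omega
  have hn1 : (0:ℕ) < n := by omega
  have hnpos : (0:ℝ) < n := by exact_mod_cast hn1
  have hc0 : 0 < c := lt_of_lt_of_le one_pos hc
  have hsn : 0 < Real.sqrt n := Real.sqrt_pos.mpr hnpos
  have hcast : ((n+1 : ℕ) : ℝ) - 1 = (n:ℝ) := by push_cast; ring
  simp only [Fin.mk_zero, hcast]
  set b := c / Real.sqrt n with hbdef
  have hb : 0 < b := div_pos hc0 hsn
  rw [volume_cap_eq n (by omega) b, volume_cap_eq n (by omega) 0]
  rw [mul_left_comm]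
  apply mul_le_mul_right
  have hss : Real.sqrt n * Real.sqrt n = (n:ℝ) := Real.mul_self_sqrt hnpos.le
  have hnb : (n:ℝ)*b = c * Real.sqrt n := by
    rw [hbdef]
    field_simp
    linear_combination (-1) * hss
  have hexp : (-(n:ℝ)/2) * b^2 = -(c^2)/2 := by
    rw [hbdef, div_pow, Real.sq_sqrt hnpos.le]
    field_simp
  have hco : (1:ℝ)/((n:ℝ)*b) = (2/c) * (1/(2*Real.sqrt n)) := by
    rw [hnb]
    field_simp
  calc ∫⁻ s in Set.Ici b, ENNReal.ofReal (Real.sqrt (1 - s^2) ^ n)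
      ≤ ENNReal.ofReal ((1/((n:ℝ)*b)) * Real.exp ((-(n:ℝ)/2) * b^2)) :=
        cap_integral_le n (by omega) b hb
    _ = ENNReal.ofReal ((2/c) * Real.exp (-(c^2)/2) * (1/(2*Real.sqrt n))) := by
        rw [hexp, hco]; ring_nf
    _ = ENNReal.ofReal ((2/c) * Real.exp (-(c^2)/2)) * ENNReal.ofReal (1/(2*Real.sqrt n)) :=
        ENNReal.ofReal_mul (by positivity)
    _ ≤ ENNReal.ofReal ((2/c) * Real.exp (-(c^2)/2)) *
          ∫⁻ s in Set.Ici (0:ℝ), ENNReal.ofReal (Real.sqrt (1 - s^2) ^ n) :=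
        mul_le_mul_right (hemi_integral_ge n hn) _
end

section
/- (DDIM marginal consistency, one-dimensional case) Let 0 < α' < 1 and 0 < α < 1 be reals, let x₀ ∈ ℝ, and let σ ≥ 0 satisfy σ² ≤ 1 − α'. Suppose X is a random variable with Gaussian law of mean √α · x₀ and variance 1 − α, and Z is an independent standard Gaussian random variable. Define Y := √α' · x₀ + √(1 − α' − σ²) · (X − √α · x₀)/√(1 − α) + σ Z. Then the law of Y is the Gaussian measure with mean √α' · x₀ and variance 1 − α'. -/
open MeasureTheory ProbabilityTheory Real
open scoped NNReal ENNReal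

namespace DDIMAux

lemma gaussianPDF_ne_top (μ : ℝ) (v : ℝ≥0) (x : ℝ) : gaussianPDF μ v x ≠ ⊤ :=
  ENNReal.ofReal_ne_top


lemma map_add_const {Ω : Type*} [MeasurableSpace Ω] {P : Measure Ω} {X : Ω → ℝ}
    (hX : Measurable X) {m : ℝ} {v : ℝ≥0} (h : Measure.map X P = gaussianReal m v) (y : ℝ) :
    Measure.map (fun ω => X ω + y) P = gaussianReal (m + y) v := by
  have hcomp : (fun ω => X ω + y) = (· + y) ∘ X := rfl
  rw [hcomp, ← Measure.map_map (measurable_add_const y) hX, h, gaussianReal_map_add_const]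

lemma map_const_add {Ω : Type*} [MeasurableSpace Ω] {P : Measure Ω} {X : Ω → ℝ}
    (hX : Measurable X) {m : ℝ} {v : ℝ≥0} (h : Measure.map X P = gaussianReal m v) (y : ℝ) :
    Measure.map (fun ω => y + X ω) P = gaussianReal (m + y) v := by
  simp_rw [add_comm y]
  exact map_add_const hX h y

lemma map_const_mul {Ω : Type*} [MeasurableSpace Ω] {P : Measure Ω} {X : Ω → ℝ}
    (hX : Measurable X) {m : ℝ} {v : ℝ≥0} (h : Measure.map X P = gaussianReal m v) (c : ℝ) :
    Measure.map (fun ω => c * X ω) P = gaussianReal (c * m) (NNReal.mk (c ^ 2) (sq_nonneg _) * v) := by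
  have hcomp : (fun ω => c * X ω) = (c * ·) ∘ X := rfl
  rw [hcomp, ← Measure.map_map (measurable_const_mul c) hX, h, gaussianReal_map_const_mul]

lemma gaussianPDFReal_mul_eq (m m' : ℝ) {v w : ℝ≥0} (hv : v ≠ 0) (hw : w ≠ 0) (x t : ℝ) :
    gaussianPDFReal m v x * gaussianPDFReal (m' + x) w t
      = gaussianPDFReal (m + m') (v + w) t
        * gaussianPDFReal (m + v * (t - m - m') / ((v:ℝ) + w)) (v * w / (v + w)) x := by
  have hv' : (v : ℝ) ≠ 0 := by exact_mod_cast hv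
  have hw' : (w : ℝ) ≠ 0 := by exact_mod_cast hw
  have hv0 : (0:ℝ) < v := lt_of_le_of_ne v.coe_nonneg (Ne.symm hv')
  have hw0 : (0:ℝ) < w := lt_of_le_of_ne w.coe_nonneg (Ne.symm hw')
  have hvw : (v : ℝ) + w ≠ 0 := by positivity
  have hu : ((v * w / (v + w) : ℝ≥0) : ℝ) = (v : ℝ) * w / ((v : ℝ) + w) := by
    push_cast; rfl
  simp only [gaussianPDFReal]
  rw [mul_mul_mul_comm, ← Real.exp_add, mul_mul_mul_comm, ← Real.exp_add]
  congr 1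
  · rw [← mul_inv, ← mul_inv, ← Real.sqrt_mul (by positivity), ← Real.sqrt_mul (by positivity)]
    congr 2
    rw [hu]
    push_cast
    field_simp
  · congr 1
    rw [hu]
    push_cast
    field_simp
    ring

lemma lintegral_gaussianPDF_mul (m m' : ℝ) {v w : ℝ≥0} (hv : v ≠ 0) (hw : w ≠ 0) (t : ℝ) :
    ∫⁻ x, gaussianPDF m v x * gaussianPDF (m' + x) w t = gaussianPDF (m + m') (v + w) t := by
  have hv' : (v : ℝ) ≠ 0 := by exact_mod_cast hv
  have hw' : (w : ℝ) ≠ 0 := by exact_mod_cast hw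
  have hvw : (v : ℝ) + w ≠ 0 := by positivity
  have hu : (v * w / (v + w) : ℝ≥0) ≠ 0 := by
    rw [ne_eq, div_eq_zero_iff, mul_eq_zero]
    push_neg
    exact ⟨⟨hv, hw⟩, by exact_mod_cast hvw⟩
  calc ∫⁻ x, gaussianPDF m v x * gaussianPDF (m' + x) w t
      = ∫⁻ x, gaussianPDF (m + m') (v + w) t
          * gaussianPDF (m + v * (t - m - m') / ((v:ℝ) + w)) (v * w / (v + w)) x := by
        congr 1
        ext x
        rw [gaussianPDF, gaussianPDF, ← ENNReal.ofReal_mul (gaussianPDFReal_nonneg _ _ _),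
          gaussianPDFReal_mul_eq m m' hv hw x t, gaussianPDF, gaussianPDF,
          ENNReal.ofReal_mul (gaussianPDFReal_nonneg _ _ _)]
    _ = gaussianPDF (m + m') (v + w) t := by
        rw [lintegral_const_mul' _ _ (gaussianPDF_ne_top _ _ _),
          lintegral_gaussianPDF_eq_one _ hu, mul_one]

lemma measurable_uncurry_pdf (m' : ℝ) (w : ℝ≥0) :
    Measurable (fun p : ℝ × ℝ => gaussianPDF (m' + p.1) w p.2) := by
  simp only [gaussianPDF, gaussianPDFReal]
  apply Measurable.ennreal_ofReal
  fun_prop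

lemma gaussianReal_conv (m m' : ℝ) (v w : ℝ≥0) :
    Measure.conv (gaussianReal m v) (gaussianReal m' w) = gaussianReal (m + m') (v + w) := by
  have hconv : ∀ (μ ν : Measure ℝ),
      Measure.conv μ ν = Measure.map (fun p : ℝ × ℝ => p.1 + p.2) (μ.prod ν) := fun _ _ => rfl
  have key : ∀ (a b : ℝ) (p q : ℝ≥0), q = 0 →
      Measure.conv (gaussianReal a p) (gaussianReal b q) = gaussianReal (a + b) (p + q) := by
    intro a b p q hq
    subst hq
    rw [hconv, gaussianReal_zero_var, Measure.prod_dirac,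
      Measure.map_map measurable_add measurable_prodMk_right, add_zero]
    have h2 : ((fun p : ℝ × ℝ => p.1 + p.2) ∘ fun x : ℝ => (x, b)) = (· + b) := rfl
    rw [h2, gaussianReal_map_add_const]
  by_cases hw : w = 0
  · exact key m m' v w hw
  by_cases hv : v = 0
  · rw [Measure.conv_comm, key m' m w v hv, add_comm m' m, add_comm w v]
  -- main case
  ext s hs
  rw [hconv, Measure.map_apply measurable_add hs, Measure.prod_apply (measurable_add hs)]
  have h1 : ∀ x : ℝ, gaussianReal m' w (Prod.mk x ⁻¹' ((fun p : ℝ × ℝ => p.1 + p.2) ⁻¹' s))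
      = ∫⁻ t in s, gaussianPDF (m' + x) w t := by
    intro x
    have hpre : Prod.mk x ⁻¹' ((fun p : ℝ × ℝ => p.1 + p.2) ⁻¹' s) = (fun y => x + y) ⁻¹' s := rfl
    rw [hpre, ← Measure.map_apply (measurable_const_add x) hs, gaussianReal_map_const_add,
      gaussianReal_apply _ hw s, add_comm m' x]
  simp_rw [h1]
  rw [gaussianReal_of_var_ne_zero _ hv,
    lintegral_withDensity_eq_lintegral_mul _ (measurable_gaussianPDF m v)
      (Measurable.lintegral_prod_right (f := fun x t => gaussianPDF (m' + x) w t)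
        (measurable_uncurry_pdf m' w))]
  simp only [Pi.mul_apply]
  calc ∫⁻ x, gaussianPDF m v x * ∫⁻ t in s, gaussianPDF (m' + x) w t
      = ∫⁻ x, ∫⁻ t in s, gaussianPDF m v x * gaussianPDF (m' + x) w t := by
        congr 1; ext x
        rw [lintegral_const_mul' _ _ (gaussianPDF_ne_top _ _ _)]
    _ = ∫⁻ t in s, ∫⁻ x, gaussianPDF m v x * gaussianPDF (m' + x) w t := by
        apply lintegral_lintegral_swap
        apply AEMeasurable.mul (f := fun p : ℝ × ℝ => gaussianPDF m v p.1)
          (g := fun p : ℝ × ℝ => gaussianPDF (m' + p.1) w p.2)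
        · exact ((measurable_gaussianPDF m v).comp measurable_fst).aemeasurable
        · exact (measurable_uncurry_pdf m' w).aemeasurable
    _ = ∫⁻ t in s, gaussianPDF (m + m') (v + w) t := by
        congr 1; ext t
        exact lintegral_gaussianPDF_mul m m' hv hw t
    _ = gaussianReal (m + m') (v + w) s := (gaussianReal_apply _ (by simp [hv]) s).symm

lemma indepFun_gaussian_add {Ω : Type*} [MeasureSpace Ω] [IsProbabilityMeasure (ℙ : Measure Ω)]
    {X Z : Ω → ℝ} (hX : Measurable X) (hZ : Measurable Z) {m m' : ℝ} {v w : ℝ≥0}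
    (hXl : Measure.map X ℙ = gaussianReal m v) (hZl : Measure.map Z ℙ = gaussianReal m' w)
    (h : IndepFun X Z ℙ) :
    Measure.map (fun ω => X ω + Z ω) ℙ = gaussianReal (m + m') (v + w) := by
  have hprod := (indepFun_iff_map_prod_eq_prod_map_map hX.aemeasurable hZ.aemeasurable).mp h
  have hcomp : (fun ω => X ω + Z ω) = (fun p : ℝ × ℝ => p.1 + p.2) ∘ fun ω => (X ω, Z ω) := rfl
  rw [hcomp, ← Measure.map_map measurable_add (hX.prodMk hZ), hprod, hXl, hZl,
    ← gaussianReal_conv m m' v w]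
  rfl

end DDIMAux

/-- (DDIM marginal consistency, one-dimensional case) If `X ∼ N(√α x₀, 1 − α)`, `Z` is an
independent standard Gaussian, `0 ≤ σ` with `σ² ≤ 1 − α'`, then
`Y = √α' x₀ + √(1 − α' − σ²) (X − √α x₀)/√(1 − α) + σZ` has law `N(√α' x₀, 1 − α')`. -/
theorem ddim_marginal_consistency {Ω : Type*} [MeasureSpace Ω]
    [IsProbabilityMeasure (ℙ : Measure Ω)]
    (α α' : ℝ) (hα : 0 < α) (hα1 : α < 1) (hα' : 0 < α') (hα'1 : α' < 1)
    (x₀ : ℝ) (σ : ℝ) (hσ0 : 0 ≤ σ) (hσ : σ ^ 2 ≤ 1 - α')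
    (X Z : Ω → ℝ) (hXmeas : Measurable X) (hZmeas : Measurable Z)
    (hXlaw : Measure.map X ℙ = gaussianReal (Real.sqrt α * x₀) (Real.toNNReal (1 - α)))
    (hZlaw : Measure.map Z ℙ = gaussianReal 0 1)
    (hindep : IndepFun X Z ℙ) :
    Measure.map
        (fun ω => Real.sqrt α' * x₀
          + Real.sqrt (1 - α' - σ ^ 2) * (X ω - Real.sqrt α * x₀) / Real.sqrt (1 - α)
          + σ * Z ω) ℙ
      = gaussianReal (Real.sqrt α' * x₀) (Real.toNNReal (1 - α')) := by
  have h1α : (0:ℝ) < 1 - α := by linarith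
  have h1σ : (0:ℝ) ≤ 1 - α' - σ ^ 2 := by linarith
  set c : ℝ := Real.sqrt (1 - α' - σ ^ 2) / Real.sqrt (1 - α) with hc
  have hc2 : c ^ 2 * (1 - α) = 1 - α' - σ ^ 2 := by
    rw [hc, div_pow, Real.sq_sqrt h1σ, Real.sq_sqrt h1α.le]
    field_simp
  have hX' : Measure.map (fun ω => X ω + -(Real.sqrt α * x₀)) ℙ
      = gaussianReal 0 (Real.toNNReal (1 - α)) := by
    have h := DDIMAux.map_add_const hXmeas hXlaw (-(Real.sqrt α * x₀))
    rw [h]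
    norm_num
  have hU : Measure.map (fun ω => c * (X ω - Real.sqrt α * x₀)) ℙ
      = gaussianReal 0 (Real.toNNReal (1 - α' - σ ^ 2)) := by
    have h := DDIMAux.map_const_mul (hXmeas.add_const _) hX' c
    simp only [mul_zero] at h
    have hfun : (fun ω => c * (X ω + -(Real.sqrt α * x₀)))
        = fun ω => c * (X ω - Real.sqrt α * x₀) := by
      funext ω; ring
    rw [hfun] at h
    rw [h]
    congr 1
    refine NNReal.coe_injective ?_
    rw [NNReal.coe_mul, Real.coe_toNNReal _ h1α.le, Real.coe_toNNReal _ h1σ]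
    exact hc2
  have hV : Measure.map (fun ω => σ * Z ω) ℙ = gaussianReal 0 (Real.toNNReal (σ ^ 2)) := by
    have h := DDIMAux.map_const_mul hZmeas hZlaw σ
    simp only [mul_zero] at h
    rw [h]
    congr 1
    refine NNReal.coe_injective ?_
    rw [NNReal.coe_mul, Real.coe_toNNReal _ (sq_nonneg σ)]
    simp
  have hind2 : IndepFun (fun ω => c * (X ω - Real.sqrt α * x₀)) (fun ω => σ * Z ω) ℙ :=
    hindep.comp ((measurable_id.sub_const _).const_mul c) (measurable_id.const_mul σ)
  have hW := DDIMAux.indepFun_gaussian_add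
    ((hXmeas.sub_const _).const_mul c) (hZmeas.const_mul σ) hU hV hind2
  have hvar : Real.toNNReal (1 - α' - σ ^ 2) + Real.toNNReal (σ ^ 2)
      = Real.toNNReal (1 - α') := by
    refine NNReal.coe_injective ?_
    rw [NNReal.coe_add, Real.coe_toNNReal _ h1σ, Real.coe_toNNReal _ (sq_nonneg σ),
      Real.coe_toNNReal _ (by linarith : (0:ℝ) ≤ 1 - α')]
    ring
  rw [hvar, zero_add] at hW
  have hfinal := DDIMAux.map_const_add (((hXmeas.sub_const _).const_mul c).add (hZmeas.const_mul σ)) hW (Real.sqrt α' * x₀)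
  rw [zero_add] at hfinal
  rw [← hfinal]
  congr 1
  funext ω
  simp only [Pi.add_apply]
  rw [hc]
  ring
end
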